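/- Let n ≥ 3 and c > 0. There exists C > 0 such that for all t ≥ 0, ∫_{{ξ ∈ ℝⁿ : |ξ| ≤ 1}} |ξ|^{-2} sin²(|ξ| t) e^{-c|ξ|² t} dξ ≤ C (1+t)^{1 - n/2}. -/

import Mathlib

open MeasureTheory

section Aux
open Real Set

lemma rpow_neg_two_eq (x : ℝ) (hx : 0 ≤ x) : x ^ (-(2:ℝ)) = (x ^ 2)⁻¹ := by
  rw [Real.rpow_neg hx, show ((2:ℝ)) = ((2:ℕ):ℝ) by norm_num, Real.rpow_natCast]

lemma integrableOn_inv_sq_ball (n : ℕ) (hn : 3 ≤ n) :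
    IntegrableOn (fun x : EuclideanSpace ℝ (Fin n) => (‖x‖ ^ 2)⁻¹)
      (Metric.closedBall 0 1) volume := by
  set E := EuclideanSpace ℝ (Fin n)
  have hmeas : Measurable fun x : E => (‖x‖ ^ 2)⁻¹ := (measurable_norm.pow_const 2).inv
  have hnn : ∀ x : E, 0 ≤ (‖x‖ ^ 2)⁻¹ := fun x => by positivity
  constructor
  · exact (hmeas.aestronglyMeasurable).restrict
  · rw [hasFiniteIntegral_iff_ofReal (ae_of_all _ hnn)]
    rw [lintegral_eq_lintegral_meas_le _ (ae_of_all _ hnn) hmeas.aemeasurable]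
    have hfr : Module.finrank ℝ E = n := finrank_euclideanSpace_fin
    set μ' := volume.restrict (Metric.closedBall (0:E) 1)
    have key : ∀ t ∈ Ioi (0:ℝ), μ' {a : E | t ≤ (‖a‖ ^ 2)⁻¹}
        ≤ min (volume (Metric.closedBall (0:E) 1))
            (ENNReal.ofReal (t ^ (-(n:ℝ)/2)) * volume (Metric.ball (0:E) 1)) := by
      intro t ht
      have ht' : (0:ℝ) < t := ht
      rw [le_min_iff]
      constructor
      · exact le_trans (measure_mono (subset_univ _)) (by
          simpa [μ', Measure.restrict_apply_univ] using le_refl _)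
      · calc μ' {a : E | t ≤ (‖a‖ ^ 2)⁻¹}
            ≤ volume {a : E | t ≤ (‖a‖ ^ 2)⁻¹} := Measure.restrict_le_self _
          _ ≤ volume (Metric.closedBall (0:E) (t ^ (-(1:ℝ)/2))) := measure_mono (fun a ha => ?_)
          _ ≤ ENNReal.ofReal (t ^ (-(n:ℝ)/2)) * volume (Metric.ball (0:E) 1) := ?_
        · simp only [mem_setOf_eq] at ha
          show a ∈ Metric.closedBall (0:E) (t ^ (-(1:ℝ)/2))
          rw [Metric.mem_closedBall, dist_zero_right]
          have ha' : ‖a‖ ^ 2 ≤ t⁻¹ := by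
            rcases eq_or_lt_of_le (norm_nonneg a) with h0 | h0
            · rw [← h0]
              simpa using (inv_nonneg.2 ht'.le)
            · have h2 : (0:ℝ) < ‖a‖ ^ 2 := by positivity
              exact (le_inv_comm₀ ht' h2).mp ha
          calc ‖a‖ ≤ Real.sqrt t⁻¹ := by
                rw [← Real.sqrt_sq (norm_nonneg a)]; exact Real.sqrt_le_sqrt ha'
            _ = t ^ (-(1:ℝ)/2) := by
                rw [Real.sqrt_eq_rpow, ← Real.rpow_neg_one, ← Real.rpow_mul ht'.le]
                norm_num
        · rw [Measure.addHaar_closedBall _ _ (Real.rpow_nonneg ht'.le _), hfr]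
          gcongr
          rw [← Real.rpow_natCast (t ^ (-(1:ℝ)/2)) n, ← Real.rpow_mul ht'.le]
          apply le_of_eq
          congr 1
          ring
    calc ∫⁻ t in Ioi (0:ℝ), μ' {a : E | t ≤ (‖a‖ ^ 2)⁻¹}
        ≤ ∫⁻ t in Ioc (0:ℝ) 1 ∪ Ioi 1, μ' {a : E | t ≤ (‖a‖ ^ 2)⁻¹} :=
          lintegral_mono_set Ioi_subset_Ioc_union_Ioi
      _ ≤ (∫⁻ t in Ioc (0:ℝ) 1, μ' {a : E | t ≤ (‖a‖ ^ 2)⁻¹})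
          + ∫⁻ t in Ioi (1:ℝ), μ' {a : E | t ≤ (‖a‖ ^ 2)⁻¹} := lintegral_union_le _ _ _
      _ < ⊤ := by
          apply ENNReal.add_lt_top.2
          constructor
          · calc (∫⁻ t in Ioc (0:ℝ) 1, μ' {a : E | t ≤ (‖a‖ ^ 2)⁻¹})
                ≤ ∫⁻ _t in Ioc (0:ℝ) 1, volume (Metric.closedBall (0:E) 1) :=
                  setLIntegral_mono' measurableSet_Ioc
                    (fun t ht => le_trans (key t ht.1) (min_le_left _ _))
              _ = volume (Metric.closedBall (0:E) 1) * volume (Ioc (0:ℝ) 1) := by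
                  rw [setLIntegral_const]
              _ < ⊤ := ENNReal.mul_lt_top measure_closedBall_lt_top (by simp)
          · calc (∫⁻ t in Ioi (1:ℝ), μ' {a : E | t ≤ (‖a‖ ^ 2)⁻¹})
                ≤ ∫⁻ t in Ioi (1:ℝ),
                    ENNReal.ofReal (t ^ (-(n:ℝ)/2)) * volume (Metric.ball (0:E) 1) :=
                  setLIntegral_mono' measurableSet_Ioi
                    (fun t ht => le_trans (key t (lt_trans zero_lt_one (ht : (1:ℝ) < t) : (0:ℝ) < t)) (min_le_right _ _))
              _ = (∫⁻ t in Ioi (1:ℝ), ENNReal.ofReal (t ^ (-(n:ℝ)/2)))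
                    * volume (Metric.ball (0:E) 1) :=
                  lintegral_mul_const' _ _ measure_ball_lt_top.ne
              _ < ⊤ := by
                  apply ENNReal.mul_lt_top _ measure_ball_lt_top
                  apply IntegrableOn.setLIntegral_lt_top
                  apply integrableOn_Ioi_rpow_of_lt _ zero_lt_one
                  have : (3:ℝ) ≤ (n:ℝ) := by exact_mod_cast hn
                  linarith

lemma integrable_gaussian_E (n : ℕ) (c : ℝ) (hc : 0 < c) :
    Integrable (fun v : EuclideanSpace ℝ (Fin n) => Real.exp (-c * ‖v‖^2)) volume := by
  have h := (GaussianFourier.integrable_cexp_neg_mul_sq_norm_add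
    (V := EuclideanSpace ℝ (Fin n)) (b := (c:ℂ)) (by simpa using hc) 0
    (0 : EuclideanSpace ℝ (Fin n))).norm
  convert h using 2 with v
  rw [Complex.norm_exp]
  norm_num
  left
  norm_cast

lemma integrable_h (n : ℕ) (hn : 3 ≤ n) (c : ℝ) (hc : 0 < c) :
    Integrable (fun x : EuclideanSpace ℝ (Fin n) =>
      (‖x‖ ^ 2)⁻¹ * Real.exp (-c * ‖x‖^2)) volume := by
  set E := EuclideanSpace ℝ (Fin n)
  have hmeas : Measurable fun x : E => (‖x‖ ^ 2)⁻¹ * Real.exp (-c * ‖x‖^2) :=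
    ((measurable_norm.pow_const 2).inv).mul
      (Real.measurable_exp.comp ((measurable_norm.pow_const 2).const_mul (-c)))
  rw [← integrableOn_univ, ← Set.union_compl_self (Metric.closedBall (0:E) 1)]
  apply IntegrableOn.union
  · apply Integrable.mono' (integrableOn_inv_sq_ball n hn) hmeas.aestronglyMeasurable.restrict
    refine ae_of_all _ fun x => ?_
    rw [Real.norm_eq_abs, abs_of_nonneg (by positivity)]
    calc (‖x‖ ^ 2)⁻¹ * Real.exp (-c * ‖x‖^2) ≤ (‖x‖ ^ 2)⁻¹ * 1 := by
          gcongr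
          exact Real.exp_le_one_iff.2 (by nlinarith [sq_nonneg ‖x‖])
      _ = (‖x‖ ^ 2)⁻¹ := mul_one _
  · apply Integrable.mono' ((integrable_gaussian_E n c hc).integrableOn)
      hmeas.aestronglyMeasurable.restrict
    filter_upwards [ae_restrict_mem measurableSet_closedBall.compl] with x hx
    rw [Real.norm_eq_abs, abs_of_nonneg (by positivity)]
    have hx1 : (1:ℝ) ≤ ‖x‖ := by
      have := by simpa [Metric.mem_closedBall, dist_zero_right] using hx
      linarith
    calc (‖x‖ ^ 2)⁻¹ * Real.exp (-c * ‖x‖^2) ≤ 1 * Real.exp (-c * ‖x‖^2) := by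
          gcongr
          rw [inv_le_one_iff₀]
          right
          nlinarith
      _ = Real.exp (-c * ‖x‖^2) := one_mul _

lemma scaling_aux (n : ℕ) (c : ℝ) (hc : 0 < c) (t : ℝ) (ht0 : 0 < t) :
    (fun ξ : EuclideanSpace ℝ (Fin n) => (‖ξ‖ ^ 2)⁻¹ * Real.exp (-c * ‖ξ‖^2 * t))
      = fun ξ : EuclideanSpace ℝ (Fin n) =>
        t * ((‖(Real.sqrt t) • ξ‖ ^ 2)⁻¹ * Real.exp (-c * ‖(Real.sqrt t) • ξ‖^2)) := by
  funext ξ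
  have hnorm : ‖(Real.sqrt t) • ξ‖^2 = t * ‖ξ‖^2 := by
    rw [norm_smul, Real.norm_eq_abs, abs_of_nonneg (Real.sqrt_nonneg t), mul_pow,
      Real.sq_sqrt ht0.le]
  rw [hnorm, mul_inv, show -c * (t * ‖ξ‖^2) = -c * ‖ξ‖^2 * t by ring]
  field_simp

lemma pow_sqrt_aux (n : ℕ) (t : ℝ) (ht0 : 0 < t) :
    t * ((Real.sqrt t) ^ n)⁻¹ = t ^ (1 - (n:ℝ)/2) := by
  have h1 : t * ((Real.sqrt t) ^ n)⁻¹ = t ^ (1:ℝ) * t ^ (-((1:ℝ)/2 * n)) := by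
    rw [Real.rpow_one, Real.sqrt_eq_rpow, ← Real.rpow_natCast (t ^ ((1:ℝ)/2)) n,
      ← Real.rpow_mul ht0.le, ← Real.rpow_neg ht0.le]
  rw [h1, ← Real.rpow_add ht0]
  congr 1
  ring

lemma integrable_ht (n : ℕ) (hn : 3 ≤ n) (c : ℝ) (hc : 0 < c) (t : ℝ) (ht0 : 0 < t) :
    Integrable (fun ξ : EuclideanSpace ℝ (Fin n) =>
      (‖ξ‖ ^ 2)⁻¹ * Real.exp (-c * ‖ξ‖^2 * t)) volume := by
  rw [scaling_aux n c hc t ht0]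
  have hRne : Real.sqrt t ≠ 0 := by positivity
  exact ((integrable_comp_smul_iff volume
    (fun x : EuclideanSpace ℝ (Fin n) => (‖x‖ ^ 2)⁻¹ * Real.exp (-c * ‖x‖^2)) hRne).2
    (integrable_h n hn c hc)).const_mul t

lemma integral_ht (n : ℕ) (hn : 3 ≤ n) (c : ℝ) (hc : 0 < c) (t : ℝ) (ht0 : 0 < t) :
    (∫ ξ : EuclideanSpace ℝ (Fin n), (‖ξ‖ ^ 2)⁻¹ * Real.exp (-c * ‖ξ‖^2 * t))
      = t ^ (1 - (n:ℝ)/2) *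
        ∫ x : EuclideanSpace ℝ (Fin n), (‖x‖ ^ 2)⁻¹ * Real.exp (-c * ‖x‖^2) := by
  rw [scaling_aux n c hc t ht0, integral_const_mul,
    Measure.integral_comp_smul_of_nonneg (μ := volume)
      (fun x : EuclideanSpace ℝ (Fin n) => (‖x‖ ^ 2)⁻¹ * Real.exp (-c * ‖x‖^2))
      (Real.sqrt t) (hR := Real.sqrt_nonneg t), smul_eq_mul, ← mul_assoc,
    finrank_euclideanSpace_fin, pow_sqrt_aux n t ht0]

end Aux

theorem stmt_8 (n : ℕ) (hn : 3 ≤ n) (c : ℝ) (hc : 0 < c) :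
    ∃ C > (0:ℝ), ∀ t ≥ (0:ℝ),
      (∫ ξ in Metric.closedBall (0 : EuclideanSpace ℝ (Fin n)) 1,
          ‖ξ‖ ^ (-(2:ℝ)) * Real.sin (‖ξ‖ * t)^2 * Real.exp (-c * ‖ξ‖^2 * t))
        ≤ C * (1 + t) ^ (1 - (n:ℝ)/2) := by
  have hn3 : (3:ℝ) ≤ (n:ℝ) := by exact_mod_cast hn
  have he : 1 - (n:ℝ)/2 ≤ 0 := by linarith
  set A := ∫ ξ in Metric.closedBall (0 : EuclideanSpace ℝ (Fin n)) 1, (‖ξ‖^2)⁻¹ with hA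
  set B := ∫ x : EuclideanSpace ℝ (Fin n), (‖x‖^2)⁻¹ * Real.exp (-c * ‖x‖^2) with hB
  have hA0 : 0 ≤ A := setIntegral_nonneg measurableSet_closedBall (fun x _ => by positivity)
  have hB0 : 0 ≤ B := integral_nonneg (fun x => by positivity)
  set K := (2:ℝ) ^ ((n:ℝ)/2 - 1) * (A + B) with hK
  have hK0 : 0 ≤ K := mul_nonneg (Real.rpow_nonneg (by norm_num) _) (by linarith)
  have hid : (2:ℝ) ^ ((n:ℝ)/2 - 1) * (2:ℝ) ^ (1 - (n:ℝ)/2) = 1 := by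
    rw [← Real.rpow_add (by norm_num : (0:ℝ) < 2)]
    norm_num
  refine ⟨K + 1, by linarith, fun t ht => ?_⟩
  have hbase : (0:ℝ) < 1 + t := by linarith
  have hpow_pos : (0:ℝ) < (1 + t) ^ (1 - (n:ℝ)/2) := Real.rpow_pos_of_pos hbase _
  have hrw : (fun ξ : EuclideanSpace ℝ (Fin n) =>
        ‖ξ‖ ^ (-(2:ℝ)) * Real.sin (‖ξ‖ * t)^2 * Real.exp (-c * ‖ξ‖^2 * t))
      = fun ξ : EuclideanSpace ℝ (Fin n) =>
        (‖ξ‖^2)⁻¹ * (Real.sin (‖ξ‖ * t)^2 * Real.exp (-c * ‖ξ‖^2 * t)) := by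
    funext ξ
    rw [rpow_neg_two_eq _ (norm_nonneg _), mul_assoc]
  rw [hrw]
  have hfm : Measurable (fun ξ : EuclideanSpace ℝ (Fin n) =>
      (‖ξ‖^2)⁻¹ * (Real.sin (‖ξ‖ * t)^2 * Real.exp (-c * ‖ξ‖^2 * t))) := by
    apply ((measurable_norm.pow_const 2).inv).mul
    apply Measurable.mul
    · exact (Real.measurable_sin.comp (measurable_norm.mul_const t)).pow_const 2
    · exact Real.measurable_exp.comp (((measurable_norm.pow_const 2).const_mul (-c)).mul_const t)
  suffices h : (∫ ξ in Metric.closedBall (0 : EuclideanSpace ℝ (Fin n)) 1,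
      (‖ξ‖^2)⁻¹ * (Real.sin (‖ξ‖ * t)^2 * Real.exp (-c * ‖ξ‖^2 * t)))
      ≤ K * (1 + t) ^ (1 - (n:ℝ)/2) by
    refine h.trans (mul_le_mul_of_nonneg_right (by linarith) hpow_pos.le)
  rcases le_or_gt t 1 with hle | hgt
  · -- small time: dominate by (‖ξ‖^2)⁻¹
    have hbd : ∀ ξ : EuclideanSpace ℝ (Fin n),
        (‖ξ‖^2)⁻¹ * (Real.sin (‖ξ‖ * t)^2 * Real.exp (-c * ‖ξ‖^2 * t)) ≤ (‖ξ‖^2)⁻¹ := by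
      intro ξ
      calc (‖ξ‖^2)⁻¹ * (Real.sin (‖ξ‖ * t)^2 * Real.exp (-c * ‖ξ‖^2 * t))
          ≤ (‖ξ‖^2)⁻¹ * (1 * 1) := by
            gcongr <;> first
              | positivity
              | exact Real.sin_sq_le_one _
              | exact Real.exp_le_one_iff.2 (by nlinarith [mul_nonneg (mul_nonneg hc.le (sq_nonneg ‖ξ‖)) ht])
        _ = (‖ξ‖^2)⁻¹ := by ring
    have hint : IntegrableOn (fun ξ : EuclideanSpace ℝ (Fin n) =>
        (‖ξ‖^2)⁻¹ * (Real.sin (‖ξ‖ * t)^2 * Real.exp (-c * ‖ξ‖^2 * t)))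
        (Metric.closedBall 0 1) volume := by
      apply Integrable.mono' (integrableOn_inv_sq_ball n hn) hfm.aestronglyMeasurable.restrict
      refine ae_of_all _ fun ξ => ?_
      rw [Real.norm_eq_abs, abs_of_nonneg (by positivity)]
      exact hbd ξ
    calc (∫ ξ in Metric.closedBall (0 : EuclideanSpace ℝ (Fin n)) 1,
          (‖ξ‖^2)⁻¹ * (Real.sin (‖ξ‖ * t)^2 * Real.exp (-c * ‖ξ‖^2 * t)))
        ≤ A := setIntegral_mono_on hint (integrableOn_inv_sq_ball n hn)
            measurableSet_closedBall (fun ξ _ => hbd ξ)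
      _ = ((2:ℝ) ^ ((n:ℝ)/2 - 1) * A) * (2:ℝ) ^ (1 - (n:ℝ)/2) := by
          rw [mul_comm ((2:ℝ) ^ ((n:ℝ)/2 - 1)) A, mul_assoc, hid, mul_one]
      _ ≤ ((2:ℝ) ^ ((n:ℝ)/2 - 1) * A) * (1 + t) ^ (1 - (n:ℝ)/2) := by
          apply mul_le_mul_of_nonneg_left _ (by positivity)
          exact Real.rpow_le_rpow_of_nonpos hbase (by linarith) he
      _ ≤ K * (1 + t) ^ (1 - (n:ℝ)/2) := by
          apply mul_le_mul_of_nonneg_right _ hpow_pos.le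
          rw [hK]
          apply mul_le_mul_of_nonneg_left (by linarith) (Real.rpow_nonneg (by norm_num) _)
  · -- large time
    have ht0 : (0:ℝ) < t := by linarith
    have hbd : ∀ ξ : EuclideanSpace ℝ (Fin n),
        (‖ξ‖^2)⁻¹ * (Real.sin (‖ξ‖ * t)^2 * Real.exp (-c * ‖ξ‖^2 * t))
          ≤ (‖ξ‖^2)⁻¹ * Real.exp (-c * ‖ξ‖^2 * t) := by
      intro ξ
      calc (‖ξ‖^2)⁻¹ * (Real.sin (‖ξ‖ * t)^2 * Real.exp (-c * ‖ξ‖^2 * t))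
          ≤ (‖ξ‖^2)⁻¹ * (1 * Real.exp (-c * ‖ξ‖^2 * t)) := by
            gcongr <;> first
              | positivity
              | exact Real.sin_sq_le_one _
        _ = (‖ξ‖^2)⁻¹ * Real.exp (-c * ‖ξ‖^2 * t) := by ring
    have hht := integrable_ht n hn c hc t ht0
    have hint : IntegrableOn (fun ξ : EuclideanSpace ℝ (Fin n) =>
        (‖ξ‖^2)⁻¹ * (Real.sin (‖ξ‖ * t)^2 * Real.exp (-c * ‖ξ‖^2 * t)))
        (Metric.closedBall 0 1) volume := by
      apply Integrable.mono' hht.integrableOn hfm.aestronglyMeasurable.restrict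
      refine ae_of_all _ fun ξ => ?_
      rw [Real.norm_eq_abs, abs_of_nonneg (by positivity)]
      exact hbd ξ
    calc (∫ ξ in Metric.closedBall (0 : EuclideanSpace ℝ (Fin n)) 1,
          (‖ξ‖^2)⁻¹ * (Real.sin (‖ξ‖ * t)^2 * Real.exp (-c * ‖ξ‖^2 * t)))
        ≤ ∫ ξ in Metric.closedBall (0 : EuclideanSpace ℝ (Fin n)) 1,
            (‖ξ‖^2)⁻¹ * Real.exp (-c * ‖ξ‖^2 * t) :=
          setIntegral_mono_on hint hht.integrableOn measurableSet_closedBall (fun ξ _ => hbd ξ)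
      _ ≤ ∫ ξ : EuclideanSpace ℝ (Fin n), (‖ξ‖^2)⁻¹ * Real.exp (-c * ‖ξ‖^2 * t) :=
          setIntegral_le_integral hht (ae_of_all _ fun ξ => by positivity)
      _ = t ^ (1 - (n:ℝ)/2) * B := integral_ht n hn c hc t ht0
      _ ≤ K * (1 + t) ^ (1 - (n:ℝ)/2) := by
          have h2t : ((2:ℝ) * t) ^ (1 - (n:ℝ)/2) ≤ (1 + t) ^ (1 - (n:ℝ)/2) :=
            Real.rpow_le_rpow_of_nonpos hbase (by linarith) he
          have hmul : ((2:ℝ) * t) ^ (1 - (n:ℝ)/2)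
              = (2:ℝ) ^ (1 - (n:ℝ)/2) * t ^ (1 - (n:ℝ)/2) :=
            Real.mul_rpow (by norm_num) ht0.le
          calc t ^ (1 - (n:ℝ)/2) * B
              = ((2:ℝ) ^ ((n:ℝ)/2 - 1) * B) * (((2:ℝ) * t) ^ (1 - (n:ℝ)/2)) := by
                rw [hmul]
                rw [show ((2:ℝ) ^ ((n:ℝ)/2 - 1) * B) * ((2:ℝ) ^ (1 - (n:ℝ)/2) * t ^ (1 - (n:ℝ)/2))
                  = ((2:ℝ) ^ ((n:ℝ)/2 - 1) * (2:ℝ) ^ (1 - (n:ℝ)/2)) * (t ^ (1 - (n:ℝ)/2) * B) by ring,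
                  hid, one_mul]
            _ ≤ ((2:ℝ) ^ ((n:ℝ)/2 - 1) * B) * (1 + t) ^ (1 - (n:ℝ)/2) :=
                mul_le_mul_of_nonneg_left h2t (by positivity)
            _ ≤ K * (1 + t) ^ (1 - (n:ℝ)/2) := by
                apply mul_le_mul_of_nonneg_right _ hpow_pos.le
                rw [hK]
                apply mul_le_mul_of_nonneg_left (by linarith) (Real.rpow_nonneg (by norm_num) _)
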